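/- Let λ = (λ₁ < λ₂ < ... < λ_t) be an unrefinable partition (a partition into distinct parts such that no part equals the sum of two distinct missing parts, where a missing part is an integer in {1,...,λ_t} not appearing in λ). Then the number m of missing parts of λ satisfies m ≤ ⌊λ_t / 2⌋. -/

import Mathlib

/-- The n-th triangular number. -/
def T (n : ℕ) : ℕ := n * (n + 1) / 2

/-- A partition of `N` into distinct parts, represented as a finite set of
positive integers with at least two elements summing to `N`. -/
def DistinctPartition (N : ℕ) (S : Finset ℕ) : Prop :=
  (∀ x ∈ S, 0 < x) ∧ 2 ≤ S.card ∧ S.sum id = N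

/-- The missing parts: integers in `{1, …, λ_t}` not appearing in the partition. -/
def Missing (S : Finset ℕ) : Finset ℕ := Finset.Icc 1 (S.sup id) \ S

/-- No part is the sum of two distinct missing parts. -/
def Unrefinable (S : Finset ℕ) : Prop :=
  ∀ a ∈ Missing S, ∀ b ∈ Missing S, a ≠ b → a + b ∉ S

def UnrefinablePartition (N : ℕ) (S : Finset ℕ) : Prop :=
  DistinctPartition N S ∧ Unrefinable S

/-- A maximal unrefinable partition: its largest part is maximal among the
largest parts of all unrefinable partitions of `N`. -/
def MaximalUnrefinable (N : ℕ) (S : Finset ℕ) : Prop :=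
  UnrefinablePartition N S ∧
    ∀ S' : Finset ℕ, UnrefinablePartition N S' → S'.sup id ≤ S.sup id

theorem missing_parts_bound (N : ℕ) (S : Finset ℕ)
    (h : UnrefinablePartition N S) :
    (Missing S).card ≤ S.sup id / 2 := by
  obtain ⟨⟨hpos, hcard, hsum⟩, hunref⟩ := h
  set L := S.sup id with hL
  have hne : S.Nonempty := Finset.card_pos.mp (by omega)
  obtain ⟨x, hxS, hxL⟩ := Finset.exists_mem_eq_sup S hne id
  have hLS : L ∈ S := by rw [hL, hxL]; exact hxS
  -- bound missing elements: each μ ∈ Missing satisfies 1 ≤ μ ≤ L and μ ∉ S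
  have hbound : ∀ μ ∈ Missing S, 1 ≤ μ ∧ μ ≤ L - 1 ∧ μ ∉ S := by
    intro μ hμ
    rw [Missing, Finset.mem_sdiff, Finset.mem_Icc] at hμ
    have hμL : μ ≠ L := fun e => hμ.2 (e ▸ hLS)
    exact ⟨hμ.1.1, by omega, hμ.2⟩
  have hL1 : 1 ≤ L := by
    obtain ⟨a, ha⟩ := hne
    calc 1 ≤ a := hpos a ha
    _ ≤ L := Finset.le_sup (f := id) ha
  have key : (Missing S).card ≤ (Finset.Icc 1 (L / 2)).card := by
    apply Finset.card_le_card_of_injOn (fun μ => min μ (L - μ))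
    · intro μ hμ
      obtain ⟨h1, h2, _⟩ := hbound μ hμ
      simp only [Finset.mem_coe, Finset.mem_Icc]
      omega
    · intro a ha b hb hab
      by_contra hne'
      have ha' := hbound a ha
      have hb' := hbound b hb
      simp only at hab
      have hsumL : a + b = L := by omega
      exact hunref a ha b hb hne' (hsumL ▸ hLS)
  calc (Missing S).card ≤ (Finset.Icc 1 (L / 2)).card := key
  _ = L / 2 := by rw [Nat.card_Icc]; omega
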